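/- arXiv:1801.06035 — 4 statements merged into one kernel-verified Lean document; each statement's English description precedes it below -/
import Mathlib

section
/- For every n ≥ 1, the quotient ring F₂[τ][u, v]/(u² + τ·v, vⁿ) is a free module over F₂[τ] of rank 2n, with basis given by the images of v^j and u·v^j for 0 ≤ j ≤ n−1. -/
open MvPolynomial

/-- `F₂[τ, u, v]`, with `τ = X 0`, `u = X 1`, `v = X 2`. -/
abbrev Poly7 := MvPolynomial (Fin 3) (ZMod 2)

/-- The ideal `(u² + τ·v, vⁿ)`. -/
noncomputable def relIdeal7 (n : ℕ) : Ideal Poly7 :=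
  Ideal.span {X 1 ^ 2 + X 0 * X 2, X 2 ^ n}

/-- `F₂[τ][u, v]/(u² + τ·v, vⁿ)` as an algebra over `F₂[τ]`, via `τ ↦ τ`. -/
noncomputable instance (n : ℕ) : Algebra (Polynomial (ZMod 2)) (Poly7 ⧸ relIdeal7 n) :=
  ((Ideal.Quotient.mkₐ (ZMod 2) (relIdeal7 n)).comp
    (Polynomial.aeval (X 0 : Poly7) : Polynomial (ZMod 2) →ₐ[ZMod 2] Poly7)).toRingHom.toAlgebra

noncomputable section Aux7

abbrev A7 := Polynomial (ZMod 2)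

def pC7 (n : ℕ) : Polynomial A7 := Polynomial.X ^ n

abbrev C7 (n : ℕ) := AdjoinRoot (pC7 n)

def qD7 (n : ℕ) : Polynomial (C7 n) :=
  Polynomial.X ^ 2 +
    Polynomial.C (algebraMap A7 (C7 n) Polynomial.X * AdjoinRoot.root (pC7 n))

abbrev D7 (n : ℕ) := AdjoinRoot (qD7 n)

lemma pC7_monic (n : ℕ) : (pC7 n).Monic := Polynomial.monic_X_pow n
lemma qD7_monic (n : ℕ) : (qD7 n).Monic :=
  Polynomial.monic_X_pow_add_C _ two_ne_zero

/-- basis of C7 over A7 -/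
def bC7 (n : ℕ) : Module.Basis (Fin n) A7 (C7 n) :=
  (AdjoinRoot.powerBasis' (pC7_monic n)).basis.reindex
    (finCongr (by show (pC7 n).natDegree = n; simp [pC7]))

lemma bC7_apply (n : ℕ) (j : Fin n) :
    bC7 n j = AdjoinRoot.root (pC7 n) ^ (j : ℕ) := by
  rw [bC7, Module.Basis.reindex_apply, PowerBasis.basis_eq_pow]
  simp

lemma C7_nontrivial (n : ℕ) (hn : 1 ≤ n) : Nontrivial (C7 n) := by
  apply AdjoinRoot.nontrivial
  rw [pC7, Polynomial.degree_X_pow]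
  exact_mod_cast Nat.one_le_iff_ne_zero.mp hn

/-- basis of D7 over C7 -/
def bD7' (n : ℕ) (hn : 1 ≤ n) : Module.Basis (Fin 2) (C7 n) (D7 n) :=
  (AdjoinRoot.powerBasis' (qD7_monic n)).basis.reindex
    (finCongr (by
      haveI := C7_nontrivial n hn
      unfold qD7; exact Polynomial.natDegree_X_pow_add_C))

lemma bD7'_apply (n : ℕ) (hn : 1 ≤ n) (i : Fin 2) :
    bD7' n hn i = AdjoinRoot.root (qD7 n) ^ (i : ℕ) := by
  rw [bD7', Module.Basis.reindex_apply, PowerBasis.basis_eq_pow]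
  simp

/-- basis of D7 over A7 -/
def bD7 (n : ℕ) (hn : 1 ≤ n) : Module.Basis (Fin n × Fin 2) A7 (D7 n) :=
  (bC7 n).smulTower (bD7' n hn)

lemma bD7_apply (n : ℕ) (hn : 1 ≤ n) (j : Fin n) (i : Fin 2) :
    bD7 n hn (j, i) = algebraMap (C7 n) (D7 n) (AdjoinRoot.root (pC7 n) ^ (j : ℕ)) *
      AdjoinRoot.root (qD7 n) ^ (i : ℕ) := by
  rw [bD7, Module.Basis.smulTower_apply, bC7_apply, bD7'_apply, Algebra.smul_def]

/-- the comparison map -/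
def f07 (n : ℕ) : Poly7 →ₐ[ZMod 2] D7 n :=
  aeval ![algebraMap A7 (D7 n) Polynomial.X, AdjoinRoot.root (qD7 n),
    algebraMap (C7 n) (D7 n) (AdjoinRoot.root (pC7 n))]

lemma f07_rel1 (n : ℕ) : f07 n (X 1 ^ 2 + X 0 * X 2) = 0 := by
  have h0 : AdjoinRoot.mk (qD7 n) (Polynomial.X ^ 2 +
      Polynomial.C (algebraMap A7 (C7 n) Polynomial.X * AdjoinRoot.root (pC7 n))) = 0 :=
    AdjoinRoot.mk_self
  rw [map_add, map_pow, AdjoinRoot.mk_X, AdjoinRoot.mk_C] at h0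
  have : (algebraMap A7 (D7 n)) Polynomial.X *
      algebraMap (C7 n) (D7 n) (AdjoinRoot.root (pC7 n)) =
      (AdjoinRoot.of (qD7 n)) (algebraMap A7 (C7 n) Polynomial.X * AdjoinRoot.root (pC7 n)) := by
    rw [map_mul, IsScalarTower.algebraMap_apply A7 (C7 n) (D7 n)]
    rfl
  have h : AdjoinRoot.root (qD7 n) ^ 2 + (algebraMap A7 (D7 n)) Polynomial.X *
      algebraMap (C7 n) (D7 n) (AdjoinRoot.root (pC7 n)) = 0 := by
    rw [this]; exact h0
  simp only [f07, map_add, map_mul, map_pow, aeval_X]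
  simpa using h

lemma root_pC7_pow (n : ℕ) : AdjoinRoot.root (pC7 n) ^ n = 0 := by
  rw [← AdjoinRoot.mk_X, ← map_pow]
  exact AdjoinRoot.mk_self

lemma f07_rel2 (n : ℕ) : f07 n (X 2 ^ n) = 0 := by
  have : f07 n (X 2 ^ n) = algebraMap (C7 n) (D7 n) (AdjoinRoot.root (pC7 n) ^ n) := by
    simp [f07, map_pow]
  rw [this, root_pC7_pow, map_zero]

lemma f07_vanish (n : ℕ) : ∀ a ∈ relIdeal7 n, f07 n a = 0 := by
  intro a ha
  have h : relIdeal7 n ≤ RingHom.ker (f07 n).toRingHom := by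
    rw [relIdeal7, Ideal.span_le]
    intro x hx
    simp only [Set.mem_insert_iff, Set.mem_singleton_iff] at hx
    rcases hx with rfl | rfl
    · exact f07_rel1 n
    · exact f07_rel2 n
  exact h ha

def fbar7 (n : ℕ) : Poly7 ⧸ relIdeal7 n →+* D7 n :=
  Ideal.Quotient.lift (relIdeal7 n) (f07 n).toRingHom (f07_vanish n)

lemma fbar7_mk (n : ℕ) (p : Poly7) :
    fbar7 n (Ideal.Quotient.mk (relIdeal7 n) p) = f07 n p := rfl

lemma algebraMap_quot_eq (n : ℕ) (a : A7) :
    algebraMap A7 (Poly7 ⧸ relIdeal7 n) a =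
      Ideal.Quotient.mk (relIdeal7 n) (Polynomial.aeval (X 0 : Poly7) a) := rfl

lemma f07_aeval (n : ℕ) (a : A7) :
    f07 n (Polynomial.aeval (X 0 : Poly7) a) = algebraMap A7 (D7 n) a := by
  have : (f07 n).comp (Polynomial.aeval (X 0 : Poly7)) =
      (IsScalarTower.toAlgHom (ZMod 2) A7 (D7 n)) := by
    apply Polynomial.algHom_ext
    simp [f07]
  exact DFunLike.congr_fun this a

lemma fbar7_smul (n : ℕ) (a : A7) (x : Poly7 ⧸ relIdeal7 n) :
    fbar7 n (a • x) = a • fbar7 n x := by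
  rw [Algebra.smul_def, algebraMap_quot_eq, map_mul, fbar7_mk, f07_aeval, Algebra.smul_def]

def fLin7 (n : ℕ) : (Poly7 ⧸ relIdeal7 n) →ₗ[A7] D7 n where
  toFun := fbar7 n
  map_add' x y := map_add (fbar7 n) x y
  map_smul' a x := fbar7_smul n a x

end Aux7

set_option maxHeartbeats 1000000 in
theorem stmt_7 (n : ℕ) (hn : 1 ≤ n) :
    ∃ b : Module.Basis (Fin n ⊕ Fin n) (Polynomial (ZMod 2)) (Poly7 ⧸ relIdeal7 n),
      (∀ j : Fin n, b (Sum.inl j) = Ideal.Quotient.mk (relIdeal7 n) (X 2 ^ (j : ℕ))) ∧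
      (∀ j : Fin n, b (Sum.inr j) = Ideal.Quotient.mk (relIdeal7 n) (X 1 * X 2 ^ (j : ℕ))) := by
  classical
  set mk := Ideal.Quotient.mk (relIdeal7 n) with hmk
  set e : Fin n ⊕ Fin n → Poly7 ⧸ relIdeal7 n :=
    Sum.elim (fun j : Fin n => mk (X 2 ^ (j : ℕ)))
      (fun j : Fin n => mk (X 1 * X 2 ^ (j : ℕ))) with he
  -- linear independence
  have hf1 : ∀ j : ℕ, f07 n (X 2 ^ j) =
      algebraMap (C7 n) (D7 n) (AdjoinRoot.root (pC7 n) ^ j) := by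
    intro j; simp [f07, map_pow]
  have hf2 : ∀ j : ℕ, f07 n (X 1 * X 2 ^ j) =
      algebraMap (C7 n) (D7 n) (AdjoinRoot.root (pC7 n) ^ j) * AdjoinRoot.root (qD7 n) := by
    intro j; simp [f07, map_pow]; ring
  set σ : Fin n ⊕ Fin n → Fin n × Fin 2 :=
    Sum.elim (fun j => (j, (0 : Fin 2))) (fun j => (j, (1 : Fin 2))) with hσ
  have hσinj : Function.Injective σ := by
    rintro (j | j) (k | k) h <;> simp [hσ, Prod.ext_iff] at h <;> simp [h]
  have hcomp : (fLin7 n) ∘ e = (bD7 n hn) ∘ σ := by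
    funext k
    rcases k with j | j
    · show fbar7 n (mk (X 2 ^ (j : ℕ))) = bD7 n hn (j, 0)
      rw [hmk, fbar7_mk, hf1, bD7_apply]
      simp
    · show fbar7 n (mk (X 1 * X 2 ^ (j : ℕ))) = bD7 n hn (j, 1)
      rw [hmk, fbar7_mk, hf2, bD7_apply]
      simp
  have li : LinearIndependent A7 e := by
    apply LinearIndependent.of_comp (fLin7 n)
    rw [hcomp]
    exact (bD7 n hn).linearIndependent.comp σ hσinj
  -- spanning
  have hvn : mk (X 2 ^ n) = 0 := by
    rw [hmk, Ideal.Quotient.eq_zero_iff_mem, relIdeal7]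
    exact Ideal.subset_span (by simp)
  have hrel : mk (X 1 ^ 2 + X 0 * X 2) = 0 := by
    rw [hmk, Ideal.Quotient.eq_zero_iff_mem, relIdeal7]
    exact Ideal.subset_span (by simp)
  have hsmul : ∀ (a : A7) (m : Poly7), a • mk m = mk (Polynomial.aeval (X 0 : Poly7) a * m) := by
    intro a m
    rw [Algebra.smul_def, algebraMap_quot_eq, hmk, ← map_mul]
  set S := Submodule.span A7 (Set.range e) with hS
  have hv : ∀ j : ℕ, mk (X 2 ^ j) ∈ S := by
    intro j
    by_cases hj : j < n
    · exact Submodule.subset_span ⟨Sum.inl ⟨j, hj⟩, rfl⟩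
    · obtain ⟨d, rfl⟩ := Nat.exists_eq_add_of_le (not_lt.mp hj)
      have hx : (X 2 ^ (n + d) : Poly7) = X 2 ^ n * X 2 ^ d := pow_add _ _ _
      rw [hx, map_mul, hvn, zero_mul]; exact S.zero_mem
  have huv : ∀ j : ℕ, mk (X 1 * X 2 ^ j) ∈ S := by
    intro j
    by_cases hj : j < n
    · exact Submodule.subset_span ⟨Sum.inr ⟨j, hj⟩, rfl⟩
    · obtain ⟨d, rfl⟩ := Nat.exists_eq_add_of_le (not_lt.mp hj)
      have hx : (X 1 * X 2 ^ (n + d) : Poly7) = X 2 ^ n * (X 1 * X 2 ^ d) := by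
        rw [pow_add]; ring
      rw [hx, map_mul, hvn, zero_mul]; exact S.zero_mem
  have hadd_self : ∀ a : Poly7, a + a = 0 := fun a => CharTwo.add_self_eq_zero a
  have hu2 : ∀ j : ℕ, mk (X 1 ^ 2 * X 2 ^ j) = mk (X 0 * X 2 ^ (j + 1)) := by
    intro j
    have hx : (X 1 ^ 2 * X 2 ^ j : Poly7) =
        (X 1 ^ 2 + X 0 * X 2) * X 2 ^ j + X 0 * X 2 ^ (j + 1) := by
      have h := hadd_self (X 0 * X 2 ^ (j + 1))
      linear_combination (-1 : Poly7) * h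
    rw [hx, map_add, map_mul, hrel, zero_mul, zero_add]
  have hclose : ∀ i : Fin 3, ∀ x ∈ S, mk (X i) * x ∈ S := by
    intro i x hx
    induction hx using Submodule.span_induction with
    | mem x hx =>
      obtain ⟨k, rfl⟩ := hx
      rcases k with j | j
      · fin_cases i
        · show mk (X 0) * mk (X 2 ^ (j : ℕ)) ∈ S
          rw [← map_mul]
          have hx : (X 0 * X 2 ^ (j : ℕ) : Poly7) =
              Polynomial.aeval (X 0 : Poly7) (Polynomial.X : A7) * X 2 ^ (j : ℕ) := by simp
          rw [hx, ← hsmul]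
          exact S.smul_mem _ (hv j)
        · show mk (X 1) * mk (X 2 ^ (j : ℕ)) ∈ S
          rw [← map_mul]
          exact huv j
        · show mk (X 2) * mk (X 2 ^ (j : ℕ)) ∈ S
          rw [← map_mul]
          have hx : (X 2 * X 2 ^ (j : ℕ) : Poly7) = X 2 ^ ((j : ℕ) + 1) := by ring
          rw [hx]
          exact hv _
      · fin_cases i
        · show mk (X 0) * mk (X 1 * X 2 ^ (j : ℕ)) ∈ S
          rw [← map_mul]
          have hx : (X 0 * (X 1 * X 2 ^ (j : ℕ)) : Poly7) =
              Polynomial.aeval (X 0 : Poly7) (Polynomial.X : A7) * (X 1 * X 2 ^ (j : ℕ)) := by simp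
          rw [hx, ← hsmul]
          exact S.smul_mem _ (huv j)
        · show mk (X 1) * mk (X 1 * X 2 ^ (j : ℕ)) ∈ S
          rw [← map_mul]
          have hx : (X 1 * (X 1 * X 2 ^ (j : ℕ)) : Poly7) = X 1 ^ 2 * X 2 ^ (j : ℕ) := by ring
          rw [hx, hu2]
          have hx2 : (X 0 * X 2 ^ ((j : ℕ) + 1) : Poly7) =
              Polynomial.aeval (X 0 : Poly7) (Polynomial.X : A7) * X 2 ^ ((j : ℕ) + 1) := by simp
          rw [hx2, ← hsmul]
          exact S.smul_mem _ (hv _)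
        · show mk (X 2) * mk (X 1 * X 2 ^ (j : ℕ)) ∈ S
          rw [← map_mul]
          have hx : (X 2 * (X 1 * X 2 ^ (j : ℕ)) : Poly7) = X 1 * X 2 ^ ((j : ℕ) + 1) := by ring
          rw [hx]
          exact huv _
    | zero => simp
    | add x y _ _ hx hy => rw [mul_add]; exact S.add_mem hx hy
    | smul a x _ hx => rw [Algebra.mul_smul_comm]; exact S.smul_mem a hx
  have key : ∀ p : Poly7, mk p ∈ S := by
    intro p
    induction p using MvPolynomial.induction_on with
    | C a =>
      have : mk (C a) = Polynomial.C a • e (Sum.inl ⟨0, hn⟩) := by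
        show mk (C a) = Polynomial.C a • mk (X 2 ^ ((0 : ℕ)))
        rw [hsmul]
        simp [algebraMap_eq]
      rw [this]
      exact S.smul_mem _ (Submodule.subset_span ⟨Sum.inl ⟨0, hn⟩, rfl⟩)
    | add p q hp hq =>
      rw [map_add]; exact S.add_mem hp hq
    | mul_X p i hp =>
      rw [show mk (p * X i) = mk (X i) * mk p from by rw [← map_mul, mul_comm]]
      exact hclose i _ hp
  have hsp : ⊤ ≤ S := by
    intro x _
    obtain ⟨p, rfl⟩ := Ideal.Quotient.mk_surjective x
    exact key p
  refine ⟨Module.Basis.mk li hsp, ?_, ?_⟩ <;> intro j <;> simp [Module.Basis.mk_apply, he]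
end

section
/- Let A = F₂[ξ₁, ξ₂, ξ₃, ...] be a polynomial algebra over F₂ with ξ₀ := 1, and define an algebra map Δ : A → A ⊗ A by Δ(ξ_n) = ∑_{i=0}^{n} ξ_{n−i}^{2^i} ⊗ ξ_i. Then Δ is coassociative: (Δ ⊗ id) ∘ Δ = (id ⊗ Δ) ∘ Δ. -/
open scoped TensorProduct

open MvPolynomial

/-- `A = F₂[ξ₁, ξ₂, ξ₃, ...]`, a polynomial algebra over `F₂` on generators indexed by
positive integers. -/
abbrev A9 := MvPolynomial ℕ+ (ZMod 2)

/-- The generators `ξ_n` for `n ≥ 1`, together with the convention `ξ₀ = 1`. -/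
noncomputable def xi9 : ℕ → A9 := fun n =>
  if h : n = 0 then 1 else X ⟨n, Nat.pos_of_ne_zero h⟩

/-- The algebra map `Δ : A → A ⊗ A` with `Δ(ξ_n) = ∑_{i=0}^{n} ξ_{n−i}^{2^i} ⊗ ξ_i`. -/
noncomputable def Delta9 : A9 →ₐ[ZMod 2] A9 ⊗[ZMod 2] A9 :=
  aeval fun p : ℕ+ =>
    ∑ i ∈ Finset.range ((p : ℕ) + 1), (xi9 ((p : ℕ) - i) ^ (2 ^ i)) ⊗ₜ[ZMod 2] xi9 i

lemma Delta9_xi (n : ℕ) :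
    Delta9 (xi9 n) = ∑ i ∈ Finset.range (n+1), (xi9 (n-i) ^ (2^i)) ⊗ₜ[ZMod 2] xi9 i := by
  rcases Nat.eq_zero_or_pos n with h | h
  · subst h
    simp [xi9, Algebra.TensorProduct.one_def]
  · have hx : xi9 n = (X (σ := ℕ+) ⟨n, h⟩ : A9) := by simp [xi9, Nat.pos_iff_ne_zero.mp h]
    rw [hx]
    rw [Delta9]; exact aeval_X _ _

instance : CharP (A9 ⊗[ZMod 2] A9) 2 := charP_of_injective_algebraMap' (ZMod 2) (A := A9 ⊗[ZMod 2] A9) 2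

/-- `Δ` is coassociative: `(Δ ⊗ id) ∘ Δ = (id ⊗ Δ) ∘ Δ`. -/
theorem stmt_9 :
    (Algebra.TensorProduct.assoc (ZMod 2) (ZMod 2) (ZMod 2) A9 A9 A9).toAlgHom.comp
        ((Algebra.TensorProduct.map Delta9 (AlgHom.id (ZMod 2) A9)).comp Delta9) =
      (Algebra.TensorProduct.map (AlgHom.id (ZMod 2) A9) Delta9).comp Delta9 := by
  ext p
  set n := (p : ℕ) with hn
  have hXp : Delta9 (X p) = ∑ i ∈ Finset.range (n+1), (xi9 (n-i) ^ (2^i)) ⊗ₜ[ZMod 2] xi9 i := by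
    simp [Delta9, aeval_X]
    rfl
  simp only [AlgHom.comp_apply, AlgEquiv.toAlgHom_eq_coe, AlgHom.coe_coe, AlgEquiv.coe_algHom, hXp, map_sum]
  have LHS : ∀ i, (Algebra.TensorProduct.assoc (ZMod 2) (ZMod 2) (ZMod 2) A9 A9 A9)
      ((Algebra.TensorProduct.map Delta9 (AlgHom.id (ZMod 2) A9))
        ((xi9 (n-i) ^ (2^i)) ⊗ₜ[ZMod 2] xi9 i)) =
      ∑ j ∈ Finset.range (n - i + 1),
        ((xi9 (n - i - j) ^ (2^j)) ^ (2^i)) ⊗ₜ[ZMod 2] ((xi9 j ^ (2^i)) ⊗ₜ[ZMod 2] xi9 i) := by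
    intro i
    rw [Algebra.TensorProduct.map_tmul, map_pow, Delta9_xi, sum_pow_char_pow, AlgHom.coe_id,
      id_eq]
    rw [TensorProduct.sum_tmul, map_sum]
    refine Finset.sum_congr rfl fun j _ => ?_
    rw [Algebra.TensorProduct.tmul_pow, Algebra.TensorProduct.assoc_tmul]
  rw [Finset.sum_congr rfl fun i _ => LHS i]
  have RHS : ∀ i, (Algebra.TensorProduct.map (AlgHom.id (ZMod 2) A9) Delta9)
      ((xi9 (n-i) ^ (2^i)) ⊗ₜ[ZMod 2] xi9 i) =
      ∑ k ∈ Finset.range (i + 1),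
        (xi9 (n - i) ^ (2^i)) ⊗ₜ[ZMod 2] ((xi9 (i - k) ^ (2^k)) ⊗ₜ[ZMod 2] xi9 k) := by
    intro i
    rw [Algebra.TensorProduct.map_tmul, Delta9_xi, AlgHom.coe_id, id_eq, TensorProduct.tmul_sum]
  rw [Finset.sum_congr rfl fun i _ => RHS i]
  rw [Finset.sum_sigma', Finset.sum_sigma']
  refine Finset.sum_nbij' (fun x => ⟨x.1 + x.2, x.1⟩) (fun x => ⟨x.2, x.1 - x.2⟩) ?_ ?_ ?_ ?_ ?_
  · rintro ⟨i, j⟩ h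
    simp only [Finset.mem_sigma, Finset.mem_range] at h ⊢
    omega
  · rintro ⟨i, k⟩ h
    simp only [Finset.mem_sigma, Finset.mem_range] at h ⊢
    omega
  · rintro ⟨i, j⟩ h
    simp only [Finset.mem_sigma, Finset.mem_range] at h
    simp only [Sigma.mk.inj_iff]
    constructor
    · trivial
    · exact heq_of_eq (by omega)
  · rintro ⟨i, k⟩ h
    simp only [Finset.mem_sigma, Finset.mem_range] at h
    simp only [Sigma.mk.inj_iff]
    constructor
    · first | trivial | omega
    · exact heq_of_eq (by omega)
  · rintro ⟨i, j⟩ h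
    simp only [Finset.mem_sigma, Finset.mem_range] at h
    have h1 : n - (i + j) = n - i - j := by omega
    have h2 : i + j - i = j := by omega
    rw [h1, h2, ← pow_mul, ← pow_add]
    ring_nf
end

section
/- Let A = F₂[ξ₁, ξ₂, ...] ⊗ E(τ₀, τ₁, ...) with ξ₀ := 1, and define an algebra map Δ : A → A ⊗ A by Δ(ξ_n) = ∑_{i=0}^{n} ξ_{n−i}^{2^i} ⊗ ξ_i and Δ(τ_n) = τ_n ⊗ 1 + ∑_{i=0}^{n} ξ_{n−i}^{2^i} ⊗ τ_i. Then Δ is coassociative. -/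
open scoped TensorProduct

open MvPolynomial

/-- The polynomial ring `F₂[ξ₁, ξ₂, ... ; τ₀, τ₁, ...]`:
`Sum.inl n` indexes `ξ_n` (`n ≥ 1`) and `Sum.inr i` indexes `τ_i`. -/
abbrev P10 := MvPolynomial (ℕ+ ⊕ ℕ) (ZMod 2)

/-- The ideal `(τ_i² : i ∈ ℕ)`, imposing the exterior-algebra relations on the `τ_i`. -/
noncomputable def relIdeal10 : Ideal P10 :=
  Ideal.span (Set.range fun i : ℕ => (X (Sum.inr i) : P10) ^ 2)

/-- `A = F₂[ξ₁, ξ₂, ...] ⊗ E(τ₀, τ₁, ...)`. -/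
abbrev A10 := P10 ⧸ relIdeal10

/-- The generators `ξ_n` for `n ≥ 1`, with the convention `ξ₀ = 1`. -/
noncomputable def xi10 : ℕ → A10 := fun n =>
  if h : n = 0 then 1 else Ideal.Quotient.mk relIdeal10 (X (Sum.inl ⟨n, Nat.pos_of_ne_zero h⟩))

/-- The exterior generators `τ_i`. -/
noncomputable def tau10 : ℕ → A10 := fun i => Ideal.Quotient.mk relIdeal10 (X (Sum.inr i))

lemma two_eq_zero' {R : Type*} [CommRing R] [Algebra (ZMod 2) R] : (2 : R) = 0 := by
  have h : ((2 : ZMod 2) : ZMod 2) = 0 := by decide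
  calc (2 : R) = algebraMap (ZMod 2) R 2 := by rw [map_ofNat]
    _ = 0 := by rw [h, map_zero]

lemma frob' {R : Type*} [CommRing R] [Algebra (ZMod 2) R] (a b : R) (i : ℕ) :
    (a + b) ^ (2 ^ i) = a ^ (2 ^ i) + b ^ (2 ^ i) := by
  induction i with
  | zero => simp
  | succ i ih =>
    rw [pow_succ, pow_mul, pow_mul, pow_mul, ih, add_sq, two_eq_zero']
    ring

lemma frob_sum' {R : Type*} [CommRing R] [Algebra (ZMod 2) R] {α : Type*} (s : Finset α)
    (f : α → R) (i : ℕ) : (∑ x ∈ s, f x) ^ (2 ^ i) = ∑ x ∈ s, f x ^ (2 ^ i) := by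
  induction s using Finset.cons_induction with
  | empty => rw [Finset.sum_empty, Finset.sum_empty,
      zero_pow (pow_pos two_pos i).ne']
  | cons a s ha ih => rw [Finset.sum_cons, Finset.sum_cons, frob', ih]

lemma frob_sumT {α : Type*} (s : Finset α) (f : α → A10 ⊗[ZMod 2] A10) (i : ℕ) :
    (∑ x ∈ s, f x) ^ (2 ^ i) = ∑ x ∈ s, f x ^ (2 ^ i) :=
  frob_sum' (R := A10 ⊗[ZMod 2] A10) s f i

lemma sum_tri' {M : Type*} [AddCommMonoid M] (n : ℕ) (f : ℕ → ℕ → M) :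
    ∑ i ∈ Finset.range (n+1), ∑ j ∈ Finset.range (n-i+1), f i j
      = ∑ k ∈ Finset.range (n+1), ∑ i ∈ Finset.range (k+1), f i (k-i) := by
  rw [Finset.sum_sigma', Finset.sum_sigma']
  apply Finset.sum_nbij' (fun x => (⟨x.1 + x.2, x.1⟩ : (k : ℕ) × ℕ))
    (fun y => (⟨y.2, y.1 - y.2⟩ : (i : ℕ) × ℕ))
  all_goals rintro ⟨a, b⟩ h
  all_goals dsimp only
  all_goals simp only [Finset.mem_sigma, Finset.mem_range, Sigma.mk.inj_iff, heq_eq_eq,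
    true_and, and_true, Nat.add_sub_cancel_left] at h ⊢
  all_goals omega

lemma sum_tri_eq {M : Type*} [AddCommMonoid M] (n : ℕ) (f g : ℕ → ℕ → M)
    (hfg : ∀ k ≤ n, ∀ i ≤ k, f i (k - i) = g k i) :
    ∑ i ∈ Finset.range (n+1), ∑ j ∈ Finset.range (n-i+1), f i j
      = ∑ k ∈ Finset.range (n+1), ∑ i ∈ Finset.range (k+1), g k i := by
  rw [sum_tri']
  refine Finset.sum_congr rfl fun k hk => Finset.sum_congr rfl fun i hi => ?_
  simp only [Finset.mem_range] at hk hi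
  exact hfg k (by omega) i (by omega)

lemma xi_term_eq {n k i : ℕ} (hk : k ≤ n) (hi : i ≤ k) :
    (xi10 (n - i - (k - i)) ^ 2 ^ (k - i)) ^ 2 ^ i = xi10 (n - k) ^ 2 ^ k := by
  have h1 : n - i - (k - i) = n - k := by omega
  rw [h1, ← pow_mul, ← pow_add, Nat.sub_add_cancel hi]


set_option maxHeartbeats 2000000 in
set_option synthInstance.maxHeartbeats 400000 in
/-- The algebra map `Δ : A → A ⊗ A` defined by `Δ(ξ_n) = ∑_{i=0}^{n} ξ_{n−i}^{2^i} ⊗ ξ_i` and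
`Δ(τ_n) = τ_n ⊗ 1 + ∑_{i=0}^{n} ξ_{n−i}^{2^i} ⊗ τ_i` is coassociative. -/
theorem stmt_10 (Δ : A10 →ₐ[ZMod 2] A10 ⊗[ZMod 2] A10)
    (hξ : ∀ n : ℕ, Δ (xi10 n) =
      ∑ i ∈ Finset.range (n + 1), (xi10 (n - i) ^ (2 ^ i)) ⊗ₜ[ZMod 2] xi10 i)
    (hτ : ∀ n : ℕ, Δ (tau10 n) =
      tau10 n ⊗ₜ[ZMod 2] 1 +
        ∑ i ∈ Finset.range (n + 1), (xi10 (n - i) ^ (2 ^ i)) ⊗ₜ[ZMod 2] tau10 i) :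
    (Algebra.TensorProduct.assoc (ZMod 2) (ZMod 2) (ZMod 2) A10 A10 A10).toAlgHom.comp
        ((Algebra.TensorProduct.map Δ (AlgHom.id (ZMod 2) A10)).comp Δ) =
      (Algebra.TensorProduct.map (AlgHom.id (ZMod 2) A10) Δ).comp Δ := by
  have hpow : ∀ (a : A10) (k : ℕ), Δ (a ^ k) = Δ a ^ k := fun a k => Δ.toRingHom.map_pow a k
  have hone : Δ 1 = 1 := Δ.toRingHom.map_one
  have key_xi : ∀ n : ℕ,
      (Algebra.TensorProduct.assoc (ZMod 2) (ZMod 2) (ZMod 2) A10 A10 A10)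
        ((Algebra.TensorProduct.map Δ (AlgHom.id (ZMod 2) A10)) (Δ (xi10 n))) =
      (Algebra.TensorProduct.map (AlgHom.id (ZMod 2) A10) Δ) (Δ (xi10 n)) := by
    intro n
    rw [hξ n, map_sum, map_sum, map_sum]
    simp only [Algebra.TensorProduct.map_tmul, AlgHom.coe_id, id_eq, map_pow, hpow, hξ,
      frob_sumT, Algebra.TensorProduct.tmul_pow, TensorProduct.sum_tmul,
      TensorProduct.tmul_sum, map_sum, Algebra.TensorProduct.assoc_tmul]
    refine sum_tri_eq n _ _ fun k hk i hi => ?_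
    rw [xi_term_eq hk hi]
  have key_tau : ∀ n : ℕ,
      (Algebra.TensorProduct.assoc (ZMod 2) (ZMod 2) (ZMod 2) A10 A10 A10)
        ((Algebra.TensorProduct.map Δ (AlgHom.id (ZMod 2) A10)) (Δ (tau10 n))) =
      (Algebra.TensorProduct.map (AlgHom.id (ZMod 2) A10) Δ) (Δ (tau10 n)) := by
    intro n
    rw [hτ n, map_add, map_add, map_add, map_sum, map_sum, map_sum]
    simp only [Algebra.TensorProduct.map_tmul, AlgHom.coe_id, id_eq, map_pow, map_one, hpow, hone,
      hξ, hτ, frob_sumT, Algebra.TensorProduct.tmul_pow, TensorProduct.sum_tmul,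
      TensorProduct.add_tmul, TensorProduct.tmul_add, TensorProduct.tmul_sum,
      map_sum, map_add, Algebra.TensorProduct.assoc_tmul]
    rw [Finset.sum_add_distrib]
    rw [add_assoc]
    congr 1
    congr 1
    refine sum_tri_eq n _ _ fun k hk i hi => ?_
    rw [xi_term_eq hk hi]
  apply Ideal.Quotient.algHom_ext
  apply MvPolynomial.algHom_ext
  rintro (n | i)
  · have gx : Ideal.Quotient.mk relIdeal10 (X (Sum.inl n)) = xi10 n := by
      unfold xi10
      rw [dif_neg]
      · rfl
      · exact n.2.ne'
    simp only [AlgHom.comp_apply, Ideal.Quotient.mkₐ_eq_mk, gx, AlgEquiv.toAlgHom_eq_coe,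
      AlgHom.coe_coe]
    exact key_xi n
  · simp only [AlgHom.comp_apply, Ideal.Quotient.mkₐ_eq_mk, AlgEquiv.toAlgHom_eq_coe,
      AlgHom.coe_coe]
    exact key_tau i
end

section
/- Let S = F₂[η, ν, α, β]/(ην, ν³, να, α² − η²β). Then for every k ≥ 0, the elements β^k and α·β^k are nonzero in S, and neither lies in the ideal generated by η. -/
set_option synthInstance.maxHeartbeats 1000000


open MvPolynomial

/-- The ideal `(ην, ν³, να, α² - η²β)` in `F₂[η, ν, α, β]`,
where `η = X 0`, `ν = X 1`, `α = X 2`, `β = X 3`. -/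
noncomputable def relIdeal13 : Ideal (MvPolynomial (Fin 4) (ZMod 2)) :=
  Ideal.span {X 0 * X 1, X 1 ^ 3, X 1 * X 2, X 2 ^ 2 - X 0 ^ 2 * X 3}

noncomputable def phi13 : MvPolynomial (Fin 4) (ZMod 2) →+* Polynomial (DualNumber (ZMod 2)) :=
  (MvPolynomial.aeval (R := ZMod 2) (σ := Fin 4) (S₁ := Polynomial (DualNumber (ZMod 2)))
    ![0, 0, Polynomial.C DualNumber.eps, Polynomial.X]).toRingHom

lemma phi13_vanish : ∀ p ∈ relIdeal13, phi13 p = 0 := by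
  have hle : relIdeal13 ≤ RingHom.ker phi13 := by
    rw [relIdeal13, Ideal.span_le]
    intro x hx
    simp only [Set.mem_insert_iff, Set.mem_singleton_iff] at hx
    rcases hx with rfl | rfl | rfl | rfl <;>
      simp [RingHom.mem_ker, phi13, sq, ← Polynomial.C_mul, DualNumber.eps_mul_eps]
  intro p hp
  exact hle hp

noncomputable def psi13 : MvPolynomial (Fin 4) (ZMod 2) ⧸ relIdeal13 →+* Polynomial (DualNumber (ZMod 2)) :=
  Ideal.Quotient.lift relIdeal13 phi13 phi13_vanish

lemma eps_ne_zero' : (DualNumber.eps : DualNumber (ZMod 2)) ≠ 0 := by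
  intro h
  have h2 := congrArg TrivSqZeroExt.snd h
  rw [DualNumber.eps, TrivSqZeroExt.snd_inr, TrivSqZeroExt.snd_zero] at h2
  exact one_ne_zero h2

theorem stmt_13 (k : ℕ) :
    Ideal.Quotient.mk relIdeal13 (X 3) ^ k ≠ 0 ∧
    Ideal.Quotient.mk relIdeal13 (X 2) * Ideal.Quotient.mk relIdeal13 (X 3) ^ k ≠ 0 ∧
    Ideal.Quotient.mk relIdeal13 (X 3) ^ k ∉
      Ideal.span {Ideal.Quotient.mk relIdeal13 (X 0)} ∧
    Ideal.Quotient.mk relIdeal13 (X 2) * Ideal.Quotient.mk relIdeal13 (X 3) ^ k ∉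
      Ideal.span {Ideal.Quotient.mk relIdeal13 (X 0)} := by
  have h3 : psi13 (Ideal.Quotient.mk relIdeal13 (X 3)) = Polynomial.X := by
    simp [psi13, phi13]
  have h2 : psi13 (Ideal.Quotient.mk relIdeal13 (X 2)) = Polynomial.C DualNumber.eps := by
    simp [psi13, phi13]
  have h0 : psi13 (Ideal.Quotient.mk relIdeal13 (X 0)) = 0 := by
    simp [psi13, phi13]
  have hXk : (Polynomial.X : Polynomial (DualNumber (ZMod 2))) ^ k ≠ 0 :=
    (Polynomial.monic_X_pow k).ne_zero
  have hCXk : Polynomial.C DualNumber.eps * (Polynomial.X : Polynomial (DualNumber (ZMod 2))) ^ k ≠ 0 := by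
    intro h
    have h2 := congrArg (fun p => Polynomial.coeff p k) h
    simp only [Polynomial.coeff_C_mul, Polynomial.coeff_X_pow, if_pos rfl,
      mul_one, Polynomial.coeff_zero] at h2
    exact eps_ne_zero' h2
  refine ⟨?_, ?_, ?_, ?_⟩
  · intro h
    apply hXk
    have := congrArg psi13 h
    simpa [h3] using this
  · intro h
    apply hCXk
    have := congrArg psi13 h
    simpa [h2, h3] using this
  · intro h
    rw [Ideal.mem_span_singleton] at h
    obtain ⟨c, hc⟩ := h
    apply hXk
    have := congrArg psi13 hc
    simpa [h3, h0] using this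
  · intro h
    rw [Ideal.mem_span_singleton] at h
    obtain ⟨c, hc⟩ := h
    apply hCXk
    have := congrArg psi13 hc
    simpa [h2, h3, h0] using this
end
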